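/- For the tripartite state |ψ*> = (1/(2√2))(|000>+|001>+|010>+|100>-|011>-|101>-|110>-|111>) with A0_i = σ_z and A1_i = -σ_x: the four Hardy zero conditions hold, namely the probability of outcomes (+1,+1,+1) vanishes under each of the measurement settings (A1,A0,A0), (A0,A1,A0), (A0,A0,A1), and the probability of outcomes (-1,-1,-1) vanishes under setting (A1,A1,A1). -/

import Mathlib

open Kronecker Matrix

/-- The Hardy-optimal state
`|ψ*⟩ = (1/(2√2))(|000⟩+|001⟩+|010⟩+|100⟩-|011⟩-|101⟩-|110⟩-|111⟩)`. -/
noncomputable def psiStar : ((Fin 2 × Fin 2) × Fin 2) → ℂ :=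
  fun p =>
    (if p = ((0, 1), 1) ∨ p = ((1, 0), 1) ∨ p = ((1, 1), 0) ∨ p = ((1, 1), 1)
      then (-1 : ℂ) else 1) / ((2 * Real.sqrt 2 : ℝ) : ℂ)

/-- Projector onto the `+1` outcome of `σ_z`, i.e. `|0⟩⟨0|`. -/
def projZplus : Matrix (Fin 2) (Fin 2) ℂ := !![1, 0; 0, 0]

/-- Projector onto the `+1` outcome of `-σ_x`, i.e. `|−⟩⟨−|`. -/
noncomputable def projMinus : Matrix (Fin 2) (Fin 2) ℂ := !![1/2, -(1/2); -(1/2), 1/2]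

/-- Projector onto the `-1` outcome of `-σ_x`, i.e. `|+⟩⟨+|`. -/
noncomputable def projPlus : Matrix (Fin 2) (Fin 2) ℂ := !![1/2, 1/2; 1/2, 1/2]

set_option maxHeartbeats 1000000 in
/-- The four Hardy zero conditions hold for `|ψ*⟩` with `A0 = σ_z` and `A1 = -σ_x`:
the probability of outcomes `(+1,+1,+1)` vanishes under settings `(A1,A0,A0)`,
`(A0,A1,A0)`, `(A0,A0,A1)`, and the probability of outcomes `(-1,-1,-1)` vanishes
under `(A1,A1,A1)`. Each probability is the squared norm of the projected state. -/
theorem psiStar_hardy_zero_conditions :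
    (∑ p, ‖((projMinus ⊗ₖ projZplus ⊗ₖ projZplus).mulVec psiStar) p‖ ^ 2 = 0) ∧
    (∑ p, ‖((projZplus ⊗ₖ projMinus ⊗ₖ projZplus).mulVec psiStar) p‖ ^ 2 = 0) ∧
    (∑ p, ‖((projZplus ⊗ₖ projZplus ⊗ₖ projMinus).mulVec psiStar) p‖ ^ 2 = 0) ∧
    (∑ p, ‖((projPlus ⊗ₖ projPlus ⊗ₖ projPlus).mulVec psiStar) p‖ ^ 2 = 0) := by
  have key : ∀ (M : Matrix ((Fin 2 × Fin 2) × Fin 2) ((Fin 2 × Fin 2) × Fin 2) ℂ),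
      (∀ p, M.mulVec psiStar p = 0) → ∑ p, ‖(M.mulVec psiStar) p‖ ^ 2 = 0 := by
    intro M h
    apply Finset.sum_eq_zero
    intro p _
    rw [h p]; simp
  refine ⟨key _ ?_, key _ ?_, key _ ?_, key _ ?_⟩ <;>
  · intro p
    obtain ⟨⟨a, b⟩, c⟩ := p
    fin_cases a <;> fin_cases b <;> fin_cases c <;>
    · simp only [Matrix.mulVec, dotProduct, Fintype.sum_prod_type, Fin.sum_univ_two,
        psiStar, projZplus, projMinus, projPlus, Matrix.kroneckerMap_apply,
        Matrix.cons_val', Matrix.cons_val_zero, Matrix.cons_val_one, Matrix.head_cons,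
        Matrix.empty_val', Matrix.cons_val_fin_one, Matrix.head_fin_const,
        Prod.mk.injEq, Fin.zero_eq_one_iff, Fin.one_eq_zero_iff]
      norm_num
      try ring
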